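/- The infinite series \sum_{k=2}^{\infty} k^2 * \zeta(k)/2^k converges and equals \log 2 + (9/4)\zeta(2) + (14/8)\zeta(3). -/

import Mathlib

open Real Filter Topology

/-- The Riemann zeta function at a natural number argument, `ζ(s) = ∑_{m≥1} 1/m^s`. -/
noncomputable def zetaNat (s : ℕ) : ℝ := ∑' m : ℕ, 1 / ((m : ℝ) + 1) ^ s

lemma summable_zetaNat {s : ℕ} (hs : 2 ≤ s) :
    Summable (fun m : ℕ => 1 / ((m : ℝ) + 1) ^ s) := by
  have h := (summable_one_div_nat_pow (p := s)).2 (by omega)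
  have := (summable_nat_add_iff (f := fun n : ℕ => 1 / (n : ℝ) ^ s) 1).2 h
  simpa [Nat.cast_add] using this

lemma hasSum_zetaNat {s : ℕ} (hs : 2 ≤ s) :
    HasSum (fun m : ℕ => 1 / ((m : ℝ) + 1) ^ s) (zetaNat s) :=
  (summable_zetaNat hs).hasSum

lemma hasSum_odd_zeta {s : ℕ} (hs : 2 ≤ s) :
    HasSum (fun m : ℕ => 1 / (2 * (m : ℝ) + 1) ^ s) ((1 - 1 / 2 ^ s) * zetaNat s) := by
  set f : ℕ → ℝ := fun n => 1 / ((n : ℝ) + 1) ^ s with hf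
  have hzeta : HasSum f (zetaNat s) := hasSum_zetaNat hs
  have hodd : HasSum (fun m : ℕ => f (2 * m + 1)) (1 / 2 ^ s * zetaNat s) := by
    have := hzeta.mul_left (1 / 2 ^ s)
    refine this.congr_fun fun m => ?_
    simp only [hf]
    push_cast
    rw [show (2 : ℝ) * m + 1 + 1 = 2 * ((m : ℝ) + 1) by ring, mul_pow]
    have h1 : ((m : ℝ) + 1) ^ s ≠ 0 := by positivity
    field_simp
  have hevensumm : Summable (fun m : ℕ => f (2 * m)) := by
    refine Summable.of_nonneg_of_le (fun m => ?_) (fun m => ?_) hzeta.summable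
    · simp only [hf]; positivity
    · simp only [hf]
      gcongr
      all_goals first
        | positivity
        | (push_cast; linarith [Nat.cast_nonneg (α := ℝ) m])
  have heven := hevensumm.hasSum
  have htot := heven.even_add_odd hodd
  have hval : ∑' m : ℕ, f (2 * m) = (1 - 1 / 2 ^ s) * zetaNat s := by
    have h := htot.unique hzeta
    linear_combination h
  rw [hval] at heven
  refine heven.congr_fun fun m => ?_
  simp only [hf]
  push_cast
  ring_nf

lemma hasSum_log_two_pairs :
    HasSum (fun m : ℕ => 1 / (2 * (m : ℝ) + 1) - 1 / (2 * (m : ℝ) + 2)) (Real.log 2) := by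
  have hteq : ∀ m : ℕ, 1 / (2 * (m : ℝ) + 1) - 1 / (2 * (m : ℝ) + 2)
      = 1 / ((2 * (m : ℝ) + 1) * (2 * (m : ℝ) + 2)) := by
    intro m
    have h1 : (2 * (m : ℝ) + 1) ≠ 0 := by positivity
    have h2 : (2 * (m : ℝ) + 2) ≠ 0 := by positivity
    field_simp
    ring
  have hsumm : Summable (fun m : ℕ => 1 / (2 * (m : ℝ) + 1) - 1 / (2 * (m : ℝ) + 2)) := by
    refine Summable.of_nonneg_of_le (fun m => ?_) (fun m => ?_) (summable_zetaNat le_rfl)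
    · rw [hteq]; positivity
    · rw [hteq]
      have hm : (0:ℝ) ≤ (m : ℝ) := Nat.cast_nonneg m
      rw [div_le_div_iff₀ (by positivity) (by positivity)]
      nlinarith
  have hpartial : ∀ N : ℕ, (∑ i ∈ Finset.range N,
      (1 / (2 * (i : ℝ) + 1) - 1 / (2 * (i : ℝ) + 2))) =
      ((harmonic (2 * N) : ℝ) - (harmonic N : ℝ)) := by
    intro N
    induction N with
    | zero => simp
    | succ n ih =>
      rw [Finset.sum_range_succ, ih, show 2 * (n + 1) = 2 * n + 1 + 1 by ring,
        harmonic_succ, harmonic_succ, harmonic_succ]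
      push_cast
      have key : ((n : ℝ) + 1)⁻¹ = (2 * (n : ℝ) + 2)⁻¹ + (2 * (n : ℝ) + 2)⁻¹ := by
        have h3 : ((n : ℝ) + 1) ≠ 0 := by positivity
        have h2 : (2 * (n : ℝ) + 2) ≠ 0 := by positivity
        field_simp
        ring
      simp only [one_div]
      linear_combination key
  have hlim : Tendsto (fun N : ℕ => (harmonic (2 * N) : ℝ) - (harmonic N : ℝ)) atTop
      (𝓝 (Real.log 2)) := by
    have h2n : Tendsto (fun n : ℕ => 2 * n) atTop atTop :=
      tendsto_atTop_mono (fun n => by show n ≤ 2 * n; omega) tendsto_id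
    have hA : Tendsto (fun n : ℕ => (harmonic (2 * n) : ℝ) - Real.log (2 * n : ℕ)) atTop
        (𝓝 Real.eulerMascheroniConstant) := Real.tendsto_harmonic_sub_log.comp h2n
    have hB := Real.tendsto_harmonic_sub_log
    have hC : Tendsto (fun n : ℕ =>
        ((harmonic (2 * n) : ℝ) - Real.log (2 * n : ℕ)) - ((harmonic n : ℝ) - Real.log n)
          + Real.log 2) atTop (𝓝 (Real.log 2)) := by
      have := (hA.sub hB).add (tendsto_const_nhds (x := Real.log 2))
      simpa using this
    refine hC.congr' ?_
    filter_upwards [eventually_ge_atTop 1] with n hn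
    have hn0 : (n : ℝ) ≠ 0 := Nat.cast_ne_zero.mpr (by omega)
    have hlog : Real.log ((2 * n : ℕ) : ℝ) = Real.log 2 + Real.log n := by
      push_cast
      rw [Real.log_mul two_ne_zero hn0]
    rw [hlog]
    ring
  have htends := hsumm.hasSum.tendsto_sum_nat
  rw [Filter.tendsto_congr hpartial] at htends
  have hval := tendsto_nhds_unique htends hlim
  exact hval ▸ hsumm.hasSum

lemma choose_two_cast (n : ℕ) : (((n + 2).choose 2 : ℕ) : ℝ) = ((n : ℝ) + 1) * ((n : ℝ) + 2) / 2 := by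
  have hd : 2 ∣ (n + 2) * (n + 1) := by
    rcases Nat.even_or_odd n with ⟨c, hc⟩ | ⟨c, hc⟩
    · exact ⟨(c + 1) * (2 * c + 1), by subst hc; ring⟩
    · exact ⟨(2 * c + 3) * (c + 1), by subst hc; ring⟩
  have h : (n + 2).choose 2 * 2 = (n + 2) * (n + 1) := by
    have e : n + 2 - 1 = n + 1 := by omega
    rw [Nat.choose_two_right, e, Nat.div_mul_cancel hd]
  have := congrArg (fun k : ℕ => (k : ℝ)) h
  push_cast at this
  linarith

lemma hasSum_col (m : ℕ) :
    HasSum (fun k : ℕ => ((k : ℝ) + 2) ^ 2 * (1 / (2 * ((m : ℝ) + 1))) ^ (k + 2))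
      (1 / (2 * (m : ℝ) + 1) - 1 / (2 * (m : ℝ) + 2) + 3 * (1 / (2 * (m : ℝ) + 1) ^ 2)
        + 2 * (1 / (2 * (m : ℝ) + 1) ^ 3)) := by
  set x : ℝ := 1 / (2 * ((m : ℝ) + 1)) with hx
  have hx0 : 0 < x := by positivity
  have hxlt : x < 1 := by
    rw [hx, div_lt_one (by positivity)]
    linarith [Nat.cast_nonneg (α := ℝ) m]
  have hxn : ‖x‖ < 1 := by rw [Real.norm_eq_abs, abs_of_pos hx0]; exact hxlt
  have h2 := hasSum_choose_mul_geometric_of_norm_lt_one (𝕜 := ℝ) 2 hxn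
  have h1 := hasSum_choose_mul_geometric_of_norm_lt_one (𝕜 := ℝ) 1 hxn
  have h0 := hasSum_choose_mul_geometric_of_norm_lt_one (𝕜 := ℝ) 0 hxn
  have hcomb := (((h2.mul_left 2).add h1).add h0).mul_left (x ^ 2)
  have hfun : ∀ k : ℕ, ((k : ℝ) + 2) ^ 2 * x ^ (k + 2)
      = x ^ 2 * (2 * ((((k + 2).choose 2 : ℕ) : ℝ) * x ^ k)
      + (((k + 1).choose 1 : ℕ) : ℝ) * x ^ k + (((k + 0).choose 0 : ℕ) : ℝ) * x ^ k) := by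
    intro k
    rw [choose_two_cast]
    simp only [Nat.choose_one_right, Nat.add_zero, Nat.choose_zero_right]
    push_cast
    ring
  have hcomb' := hcomb.congr_fun hfun
  convert hcomb' using 1
  case e'_3 => rfl
  have hy : (2 * (m : ℝ) + 1) ≠ 0 := by positivity
  have hy2 : (2 * (m : ℝ) + 2) ≠ 0 := by positivity
  have h1x : 1 - x = (2 * (m : ℝ) + 1) / (2 * (m : ℝ) + 2) := by
    rw [hx]
    field_simp
    ring
  rw [h1x, hx]
  norm_num only
  field_simp
  ring

theorem sum_sq_mul_zeta_div_two_pow :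
    HasSum (fun k : ℕ => ((k : ℝ) + 2) ^ 2 * zetaNat (k + 2) / 2 ^ (k + 2))
      (Real.log 2 + 9 / 4 * zetaNat 2 + 14 / 8 * zetaNat 3) := by
  set T : ℝ := Real.log 2 + 9 / 4 * zetaNat 2 + 14 / 8 * zetaNat 3 with hT
  set g : ℕ → ℝ := fun m => 1 / (2 * (m : ℝ) + 1) - 1 / (2 * (m : ℝ) + 2)
    + 3 * (1 / (2 * (m : ℝ) + 1) ^ 2) + 2 * (1 / (2 * (m : ℝ) + 1) ^ 3) with hg
  have hgsum : HasSum g T := by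
    have h1 := hasSum_log_two_pairs
    have h2 := (hasSum_odd_zeta (s := 2) le_rfl).mul_left 3
    have h3 := (hasSum_odd_zeta (s := 3) (by norm_num)).mul_left 2
    have := (h1.add h2).add h3
    convert this using 1
    rw [hT]
    ring
  set F : ℕ × ℕ → ℝ := fun p =>
    ((p.2 : ℝ) + 2) ^ 2 * (1 / (2 * ((p.1 : ℝ) + 1))) ^ (p.2 + 2) with hF
  have hFnonneg : 0 ≤ F := fun p => by positivity
  have hcol : ∀ m : ℕ, HasSum (fun k => F (m, k)) (g m) := fun m => hasSum_col m
  have hFsumm : Summable F := by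
    rw [summable_prod_of_nonneg hFnonneg]
    refine ⟨fun m => (hcol m).summable, ?_⟩
    have : (fun m : ℕ => ∑' k, F (m, k)) = g := funext fun m => (hcol m).tsum_eq
    rw [this]
    exact hgsum.summable
  have hFtot : HasSum F T := by
    have h := hFsumm.hasSum
    have h2 : HasSum g (∑' p, F p) := h.prod_fiberwise hcol
    rwa [h2.unique hgsum] at h
  have hswap : HasSum (fun p : ℕ × ℕ => F (p.2, p.1)) T :=
    ((Equiv.prodComm ℕ ℕ).hasSum_iff (f := F) (a := T)).2 hFtot
  have hrow : ∀ k : ℕ, HasSum (fun m => F (m, k))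
      (((k : ℝ) + 2) ^ 2 * zetaNat (k + 2) / 2 ^ (k + 2)) := by
    intro k
    have hz := hasSum_zetaNat (s := k + 2) (by omega)
    have h := hz.mul_left (((k : ℝ) + 2) ^ 2 / 2 ^ (k + 2))
    have heq : (((k : ℝ) + 2) ^ 2 / 2 ^ (k + 2)) * zetaNat (k + 2)
        = ((k : ℝ) + 2) ^ 2 * zetaNat (k + 2) / 2 ^ (k + 2) := by ring
    rw [heq] at h
    refine h.congr_fun fun m => ?_
    simp only [hF]
    have h1 : ((m : ℝ) + 1) ≠ 0 := by positivity
    rw [div_pow, one_pow, mul_pow]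
    field_simp
  exact hswap.prod_fiberwise hrow
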